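/- For every prime p with p ≡ 1 (mod 3) and p > 7, there exists a prime q with q < 2·p^{1/2} such that q is a cubic residue modulo p. -/

import Mathlib

namespace Nagell

open Finset

noncomputable section

variable (p : ℕ) [Fact p.Prime]

/-- a generator of the units of `ZMod p`. -/
def gen : (ZMod p)ˣ := (IsCyclic.exists_generator (α := (ZMod p)ˣ)).choose

lemma gen_spec : ∀ u : (ZMod p)ˣ, u ∈ Subgroup.zpowers (gen p) :=
  (IsCyclic.exists_generator (α := (ZMod p)ˣ)).choose_spec

variable {p}

lemma exists_pow_gen (u : (ZMod p)ˣ) : ∃ k : ℕ, gen p ^ k = u := by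
  have h := gen_spec p u
  rw [← mem_powers_iff_mem_zpowers, Submonoid.mem_powers_iff] at h
  exact h

/-- discrete logarithm -/
def dl (u : (ZMod p)ˣ) : ℕ := Nat.find (exists_pow_gen u)

lemma gen_pow_dl (u : (ZMod p)ˣ) : gen p ^ dl u = u := Nat.find_spec (exists_pow_gen u)

/-- the cubic residue class -/
def ind (u : (ZMod p)ˣ) : ZMod 3 := (dl u : ZMod 3)

section Ind

variable (hp3 : p % 3 = 1)
include hp3

omit hp3 in
lemma orderOf_gen : orderOf (gen p) = p - 1 := by
  rw [orderOf_eq_card_of_forall_mem_zpowers (gen_spec p), Nat.card_eq_fintype_card,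
    ZMod.card_units_eq_totient, Nat.totient_prime (Fact.out : p.Prime)]

lemma cast_eq_of_pow_gen_eq {m n : ℕ} (h : gen p ^ m = gen p ^ n) :
    (m : ZMod 3) = (n : ZMod 3) := by
  rw [pow_eq_pow_iff_modEq, orderOf_gen] at h
  have h3 : 3 ∣ p - 1 := by omega
  exact (ZMod.natCast_eq_natCast_iff _ _ _).mpr (h.of_dvd h3)

lemma ind_eq_of_pow_eq {u : (ZMod p)ˣ} {k : ℕ} (h : gen p ^ k = u) : ind u = (k : ZMod 3) :=
  cast_eq_of_pow_gen_eq hp3 (by rw [gen_pow_dl, h])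

lemma ind_mul (u v : (ZMod p)ˣ) : ind (u * v) = ind u + ind v := by
  have : gen p ^ (dl u + dl v) = u * v := by rw [pow_add, gen_pow_dl, gen_pow_dl]
  rw [ind_eq_of_pow_eq hp3 this, Nat.cast_add]; rfl

lemma ind_one : ind (1 : (ZMod p)ˣ) = 0 := by
  have : gen p ^ 0 = (1 : (ZMod p)ˣ) := pow_zero _
  rw [ind_eq_of_pow_eq hp3 this]; rfl

lemma ind_pow (u : (ZMod p)ˣ) (k : ℕ) : ind (u ^ k) = (k : ZMod 3) * ind u := by
  induction k with
  | zero => simpa using ind_one hp3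
  | succ n ih =>
      rw [pow_succ, ind_mul hp3, ih, Nat.cast_add, Nat.cast_one]; ring

lemma ind_gen : ind (gen p) = 1 := by
  have : gen p ^ 1 = gen p := pow_one _
  rw [ind_eq_of_pow_eq hp3 this]; rfl

lemma ind_neg_one : ind (-1 : (ZMod p)ˣ) = 0 := by
  have h : ((-1 : (ZMod p)ˣ)) ^ 3 = -1 := Odd.neg_one_pow (by decide)
  have := ind_pow hp3 (-1 : (ZMod p)ˣ) 3
  rw [h] at this
  have h3 : ((3 : ℕ) : ZMod 3) = 0 := by decide
  rw [h3, zero_mul] at this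
  exact this

lemma ind_eq_zero_iff_cube (u : (ZMod p)ˣ) : ind u = 0 ↔ ∃ v : (ZMod p)ˣ, v ^ 3 = u := by
  constructor
  · intro h
    have h3 : (3:ℕ) ∣ dl u := by
      have : ((dl u : ℕ) : ZMod 3) = 0 := h
      exact (ZMod.natCast_eq_zero_iff _ _).mp this
    obtain ⟨m, hm⟩ := h3
    exact ⟨gen p ^ m, by rw [← pow_mul, mul_comm, ← hm, gen_pow_dl]⟩
  · rintro ⟨v, rfl⟩
    rw [ind_pow hp3]
    have h3 : ((3 : ℕ) : ZMod 3) = 0 := by decide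
    rw [h3, zero_mul]


end Ind

section Char

variable (hp3 : p % 3 = 1)

variable {K : Type*} [Field K] {ζ : K}

/-- `ζ` as a unit -/
def zunit (hζ : IsPrimitiveRoot ζ 3) : Kˣ := (hζ.isUnit (by norm_num)).unit

lemma zunit_val (hζ : IsPrimitiveRoot ζ 3) : ((zunit hζ : Kˣ) : K) = ζ := IsUnit.unit_spec _

lemma zunit_pow3 (hζ : IsPrimitiveRoot ζ 3) : (zunit hζ) ^ 3 = 1 := by
  ext
  rw [Units.val_pow_eq_pow_val, zunit_val, hζ.pow_eq_one, Units.val_one]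

/-- The cubic character mod `p` with values in `K`, determined by `ζ`. -/
def chi (hp3 : p % 3 = 1) (hζ : IsPrimitiveRoot ζ 3) : MulChar (ZMod p) K :=
  MulChar.ofUnitHom
  { toFun := fun u => zunit hζ ^ (ind u).val
    map_one' := by
      show zunit hζ ^ (ind (1 : (ZMod p)ˣ)).val = 1
      rw [ind_one hp3, ZMod.val_zero, pow_zero]
    map_mul' := fun u v => by
      show zunit hζ ^ (ind (u * v)).val = zunit hζ ^ (ind u).val * zunit hζ ^ (ind v).val
      rw [ind_mul hp3, ← pow_add, ZMod.val_add,
        ← pow_eq_pow_mod _ (zunit_pow3 hζ)] }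

lemma chi_coe (hζ : IsPrimitiveRoot ζ 3) (u : (ZMod p)ˣ) :
    chi hp3 hζ (u : ZMod p) = ζ ^ (ind u).val := by
  rw [chi, MulChar.ofUnitHom_coe]
  rw [MonoidHom.coe_mk, OneHom.coe_mk, Units.val_pow_eq_pow_val, zunit_val]

lemma chi_cube (hζ : IsPrimitiveRoot ζ 3) : (chi hp3 hζ) ^ 3 = 1 := by
  apply MulChar.ext
  intro u
  rw [MulChar.pow_apply_coe, MulChar.one_apply_coe, chi_coe hp3 hζ, ← pow_mul, mul_comm,
    pow_mul, hζ.pow_eq_one, one_pow]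

lemma chi_ne_one (hζ : IsPrimitiveRoot ζ 3) : chi hp3 hζ ≠ (1 : MulChar (ZMod p) K) := by
  intro h
  have h2 : chi hp3 hζ ((gen p : (ZMod p)ˣ) : ZMod p) = 1 := by
    rw [h, MulChar.one_apply_coe]
  rw [chi_coe hp3 hζ] at h2
  rw [ind_gen hp3] at h2
  rw [show ((1 : ZMod 3)).val = 1 from rfl, pow_one] at h2
  exact hζ.ne_one (by norm_num) h2

lemma chi_orderOf (hζ : IsPrimitiveRoot ζ 3) : orderOf (chi hp3 hζ) = 3 := by
  haveI : Fact (Nat.Prime 3) := ⟨by norm_num⟩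
  exact orderOf_eq_prime (chi_cube hp3 hζ) (chi_ne_one hp3 hζ)

lemma chi_sq_ne_one (hζ : IsPrimitiveRoot ζ 3) :
    chi hp3 hζ * chi hp3 hζ ≠ (1 : MulChar (ZMod p) K) := by
  intro h
  have : orderOf (chi hp3 hζ) ∣ 2 := orderOf_dvd_of_pow_eq_one (by rw [pow_two]; exact h)
  rw [chi_orderOf hp3 hζ] at this
  omega

lemma chi_eq_one_iff (hζ : IsPrimitiveRoot ζ 3) (u : (ZMod p)ˣ) :
    chi hp3 hζ (u : ZMod p) = 1 ↔ ind u = 0 := by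
  rw [chi_coe hp3 hζ]
  constructor
  · intro h
    have h3 : (3:ℕ) ∣ (ind u).val := (IsPrimitiveRoot.pow_eq_one_iff_dvd hζ _).mp h
    have := (ind u).val_lt
    have : (ind u).val = 0 := by omega
    exact (ZMod.val_eq_zero _).mp this
  · intro h
    rw [h, ZMod.val_zero, pow_zero]

lemma chi_neg_one (hζ : IsPrimitiveRoot ζ 3) : chi hp3 hζ (-1 : ZMod p) = 1 := by
  have h : ((-1 : (ZMod p)ˣ) : ZMod p) = (-1 : ZMod p) := by simp
  rw [← h, chi_eq_one_iff hp3 hζ]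
  exact ind_neg_one hp3

lemma chi_inv_eq (hζ : IsPrimitiveRoot ζ 3) :
    (chi hp3 hζ)⁻¹ = chi hp3 (hζ.pow_of_coprime 2 (by norm_num)) := by
  apply MulChar.ext
  intro u
  rw [MulChar.inv_apply_eq_inv', chi_coe hp3 hζ, chi_coe hp3 _]
  apply inv_eq_of_mul_eq_one_right
  rw [← pow_mul, ← pow_add]
  have h3 : (ind u).val + 2 * (ind u).val = 3 * (ind u).val := by ring
  rw [h3, pow_mul, hζ.pow_eq_one, one_pow]

end Char

section Jacobi

variable (p)

/-- extension of `ind` to all of `ZMod p` -/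
def indF (t : ZMod p) : ZMod 3 := if h : t = 0 then 0 else ind (Units.mk0 t h)

variable {p}

lemma indF_coe (u : (ZMod p)ˣ) : indF p (u : ZMod p) = ind u := by
  rw [indF, dif_neg u.ne_zero]
  congr 1
  exact Units.ext rfl

variable (p)

/-- fiber counts for the Jacobi sum -/
def NN (j : ZMod 3) : ℕ :=
  ((univ : Finset (ZMod p)).filter
    (fun t => (t ≠ 0 ∧ 1 - t ≠ 0) ∧ indF p t + indF p (1 - t) = j)).card

/-- first coordinate of the Jacobi sum -/
def Ja : ℤ := (NN p 0 : ℤ) - NN p 2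

/-- second coordinate of the Jacobi sum -/
def Jb : ℤ := (NN p 1 : ℤ) - NN p 2

variable {p}


lemma cube_sum_eq_zero {K : Type*} [Field K] {ζ : K} (hζ : IsPrimitiveRoot ζ 3) :
    ζ ^ 2 + ζ + 1 = 0 := by
  have hz3 : ζ ^ 3 = 1 := hζ.pow_eq_one
  have h1 : (ζ - 1) * (ζ ^ 2 + ζ + 1) = ζ ^ 3 - 1 := by ring
  have h3 : ζ - 1 ≠ 0 := sub_ne_zero.mpr (hζ.ne_one (by norm_num))
  have h4 : (ζ - 1) * (ζ ^ 2 + ζ + 1) = 0 := by rw [h1, hz3, sub_self]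
  exact (mul_eq_zero.mp h4).resolve_left h3

lemma jacobiSum_chi {K : Type*} [Field K] {ζ : K} (hp3 : p % 3 = 1)
    (hζ : IsPrimitiveRoot ζ 3) :
    jacobiSum (chi hp3 hζ) (chi hp3 hζ) = (Ja p : K) + (Jb p : K) * ζ := by
  classical
  have hz3 : ζ ^ 3 = 1 := hζ.pow_eq_one
  have hz2 : ζ ^ 2 + ζ + 1 = 0 := cube_sum_eq_zero hζ
  have key : ∀ t : ZMod p, chi hp3 hζ t * chi hp3 hζ (1 - t)
      = if t ≠ 0 ∧ 1 - t ≠ 0 then ζ ^ ((indF p t + indF p (1 - t)).val) else 0 := by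
    intro t
    by_cases h0 : t = 0
    · rw [if_neg (by tauto), h0, MulChar.map_zero, zero_mul]
    by_cases h1 : 1 - t = 0
    · rw [if_neg (by tauto), h1, MulChar.map_zero, mul_zero]
    rw [if_pos ⟨h0, h1⟩]
    have hu : IsUnit t := (Ne.isUnit h0)
    have hv : IsUnit (1 - t) := (Ne.isUnit h1)
    have e1 : chi hp3 hζ t = ζ ^ (indF p t).val := by
      conv_lhs => rw [← hu.unit_spec]
      rw [chi_coe hp3 hζ, ← indF_coe hu.unit, hu.unit_spec]
    have e2 : chi hp3 hζ (1 - t) = ζ ^ (indF p (1 - t)).val := by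
      conv_lhs => rw [← hv.unit_spec]
      rw [chi_coe hp3 hζ, ← indF_coe hv.unit, hv.unit_spec]
    rw [e1, e2, ← pow_add, ZMod.val_add, ← pow_eq_pow_mod _ hz3]
  rw [jacobiSum, Finset.sum_congr rfl (fun t _ => key t), Finset.sum_ite,
    Finset.sum_const_zero, add_zero]
  rw [← Finset.sum_fiberwise_of_maps_to
      (g := fun t => indF p t + indF p (1 - t)) (t := (univ : Finset (ZMod 3)))
      (fun t _ => Finset.mem_univ _) (fun t => ζ ^ ((indF p t + indF p (1 - t)).val))]
  have inner : ∀ j : ZMod 3,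
      (∑ t ∈ (univ.filter (fun t : ZMod p => t ≠ 0 ∧ 1 - t ≠ 0)).filter
        (fun t => indF p t + indF p (1 - t) = j), ζ ^ ((indF p t + indF p (1 - t)).val))
      = (NN p j : K) * ζ ^ j.val := by
    intro j
    rw [Finset.sum_congr rfl (fun t ht => by rw [(Finset.mem_filter.mp ht).2]),
      Finset.sum_const, nsmul_eq_mul, NN, Finset.filter_filter]
  rw [Finset.sum_congr rfl (fun j _ => inner j)]
  rw [show (univ : Finset (ZMod 3)) = {0, 1, 2} by decide]
  rw [Finset.sum_insert (by decide), Finset.sum_insert (by decide), Finset.sum_singleton]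
  rw [show (0 : ZMod 3).val = 0 from rfl, show (1 : ZMod 3).val = 1 from rfl,
    show (2 : ZMod 3).val = 2 from rfl, Ja, Jb]
  push_cast
  linear_combination (NN p 2 : K) * hz2

lemma norm_eq (hp3 : p % 3 = 1) : Ja p ^ 2 - Ja p * Jb p + Jb p ^ 2 = p := by
  have hζ : IsPrimitiveRoot (Complex.exp (2 * Real.pi * Complex.I / 3)) 3 :=
    Complex.isPrimitiveRoot_exp 3 (by norm_num)
  set ζ := Complex.exp (2 * Real.pi * Complex.I / 3) with hzdef
  have hζ2 : IsPrimitiveRoot (ζ ^ 2) 3 := hζ.pow_of_coprime 2 (by norm_num)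
  have hchar : ringChar ℂ ≠ ringChar (ZMod p) := by
    rw [ringChar.eq_zero, ZMod.ringChar_zmod_n]
    exact fun h => (Fact.out : p.Prime).ne_zero h.symm
  have h := jacobiSum_mul_jacobiSum_inv hchar (chi_ne_one hp3 hζ) (chi_ne_one hp3 hζ)
    (chi_sq_ne_one hp3 hζ)
  rw [chi_inv_eq hp3 hζ, jacobiSum_chi hp3 hζ, jacobiSum_chi hp3 hζ2, ZMod.card] at h
  have hz3 : ζ ^ 3 = 1 := hζ.pow_eq_one
  have hz2 : ζ ^ 2 + ζ + 1 = 0 := cube_sum_eq_zero hζ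
  have key : ((Ja p ^ 2 - Ja p * Jb p + Jb p ^ 2 : ℤ) : ℂ) = ((p : ℤ) : ℂ) := by
    push_cast
    push_cast at h
    linear_combination h - ((Ja p : ℂ) * (Jb p : ℂ)) * hz2 - ((Jb p : ℂ) ^ 2) * hz3
  exact_mod_cast key

end Jacobi

section CharQ

lemma eq_one_of_pow248 {K : Type*} [Field K] {c : K} (h3 : c ^ 3 = 1)
    (h : c ^ 2 = 1 ∨ c ^ 4 = 1 ∨ c ^ 8 = 1) : c = 1 := by
  have k2 : c ^ 2 = 1 → c = 1 := by
    intro h2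
    have e : c ^ 3 = c ^ 2 * c := by ring
    rw [h3, h2, one_mul] at e
    exact e.symm
  have k4 : c ^ 4 = 1 → c = 1 := by
    intro h4
    have e : c ^ 4 = c ^ 3 * c := by ring
    rw [h4, h3, one_mul] at e
    exact e.symm
  have k8 : c ^ 8 = 1 → c = 1 := by
    intro h8
    apply k2
    have e : c ^ 8 = (c ^ 3) ^ 2 * c ^ 2 := by ring
    rw [h8, h3, one_pow, one_mul] at e
    exact e.symm
  tauto

lemma cubic_residue_of_dvd (hp3 : p % 3 = 1) {q : ℕ} (hq : q.Prime) (hq3 : q ≠ 3)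
    (hqp : ¬ q ∣ p) (hdvd : (q:ℤ) ∣ Jb p ∨ (q:ℤ) ∣ 2 * Ja p - Jb p) :
    ∃ x : ZMod p, x ^ 3 = (q : ZMod p) := by
  haveI : Fact q.Prime := ⟨hq⟩
  set K := AlgebraicClosure (ZMod q) with hK
  haveI : CharP K q := charP_of_injective_algebraMap (algebraMap (ZMod q) K).injective q
  have h3K : ((3 : ℕ) : K) ≠ 0 := by
    rw [Ne, CharP.cast_eq_zero_iff K q]
    exact fun h => hq3 ((Nat.prime_dvd_prime_iff_eq hq (by norm_num)).mp h)
  have hpK : ((p : ℕ) : K) ≠ 0 := by rw [Ne, CharP.cast_eq_zero_iff K q]; exact hqp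
  -- a primitive cube root of unity
  haveI : NeZero ((3 : ℕ) : K) := ⟨h3K⟩
  obtain ⟨ζ, hζ0⟩ := IsAlgClosed.exists_root _
    (Polynomial.degree_cyclotomic_pos 3 K (by norm_num)).ne.symm
  have hζ : IsPrimitiveRoot ζ 3 := Polynomial.isRoot_cyclotomic_iff.mp hζ0
  -- a primitive p-th root of unity
  haveI : NeZero ((p : ℕ) : K) := ⟨hpK⟩
  obtain ⟨ξ, hξ0⟩ := IsAlgClosed.exists_root _
    (Polynomial.degree_cyclotomic_pos p K (Fact.out : p.Prime).pos).ne.symm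
  have hξ : IsPrimitiveRoot ξ p := Polynomial.isRoot_cyclotomic_iff.mp hξ0
  set χ : MulChar (ZMod p) K := chi hp3 hζ with hχdef
  set ψ : AddChar (ZMod p) K := AddChar.zmodChar p hξ.pow_eq_one with hψdef
  have hψ : ψ.IsPrimitive := AddChar.zmodChar_primitive_of_primitive_root p hξ
  set g : K := gaussSum χ ψ with hgdef
  have hcK : ((Fintype.card (ZMod p) : ℕ) : K) ≠ 0 := by rwa [ZMod.card]
  have hg0 : g ≠ 0 := gaussSum_ne_zero_of_nontrivial hcK (chi_ne_one hp3 hζ) hψ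
  set J : K := jacobiSum χ χ with hJdef
  have hJ : J = (Ja p : K) + (Jb p : K) * ζ := jacobiSum_chi hp3 hζ
  have horder : orderOf χ = 3 := chi_orderOf hp3 hζ
  have hχ3 : χ ^ 3 = 1 := chi_cube hp3 hζ
  have hmul : g * gaussSum χ⁻¹ ψ⁻¹ = ((p : ℕ) : K) := by
    rw [hgdef, gaussSum_mul_gaussSum_eq_card (chi_ne_one hp3 hζ) hψ, ZMod.card]
  have hcube : g ^ 3 = ((p : ℕ) : K) * J := by
    have h := gaussSum_pow_eq_prod_jacobiSum (χ := χ) (ψ := ψ) (by rw [horder]; norm_num) hψ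
    rw [horder] at h
    rw [show (3:ℕ) - 1 = 2 from rfl, Nat.Ico_succ_singleton, Finset.prod_singleton,
      pow_one, chi_neg_one hp3 hζ, one_mul, ZMod.card] at h
    exact h
  -- the character value at q
  have hqF : ((q : ℕ) : ZMod p) ≠ 0 := by
    rw [Ne, ZMod.natCast_eq_zero_iff]
    intro h
    exact hqp (((Nat.prime_dvd_prime_iff_eq (Fact.out : p.Prime) hq).mp h) ▸ dvd_refl p)
  set qu : (ZMod p)ˣ := Units.mk0 _ hqF with hqu
  set c : K := χ ((q : ℕ) : ZMod p) with hcdef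
  have hc3 : c ^ 3 = 1 := by
    have h := MulChar.pow_apply' χ (three_ne_zero) (((q : ℕ) : ZMod p))
    rw [hχ3, MulChar.one_apply (Ne.isUnit hqF)] at h
    rw [hcdef, ← h]
  -- Frobenius relation
  have hshift : (χ ^ (q % 3)) ((q:ℕ) : ZMod p) * g ^ q = gaussSum (χ ^ (q % 3)) ψ := by
    have h := gaussSum_frob q χ ψ
    have hchiq : χ ^ q = χ ^ (q % 3) := by
      have hd : q = 3 * (q / 3) + q % 3 := (Nat.div_add_mod q 3).symm
      calc χ ^ q = χ ^ (3 * (q / 3) + q % 3) := by rw [← hd]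
      _ = (χ ^ 3) ^ (q / 3) * χ ^ (q % 3) := by rw [pow_add, pow_mul]
      _ = χ ^ (q % 3) := by rw [hχ3, one_pow, one_mul]
    simp only [hchiq, AddChar.pow_mulShift] at h
    rw [← hgdef] at h
    rw [h]
    exact gaussSum_mulShift (χ ^ (q % 3)) ψ qu
  have hq30 : q % 3 = 1 ∨ q % 3 = 2 := by
    have : ¬ (3 ∣ q) := fun h => hq3 ((Nat.prime_dvd_prime_iff_eq (by norm_num) hq).mp h).symm
    omega
  -- p-power fixed points
  have hpfix : ((p : ℕ) : K) ^ q = ((p : ℕ) : K) := by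
    have e : ((p:ℕ) : K) = algebraMap (ZMod q) K ((p:ℕ) : ZMod q) := by rw [map_natCast]
    rw [e, ← map_pow, ZMod.pow_card]
  -- final goal reduction
  suffices hcone : c = 1 by
    have hind : ind qu = 0 := (chi_eq_one_iff hp3 hζ qu).mp hcone
    obtain ⟨v, hv⟩ := (ind_eq_zero_iff_cube hp3 qu).mp hind
    refine ⟨(v : ZMod p), ?_⟩
    rw [← Units.val_pow_eq_pow_val, hv]
    rfl
  -- powers of p in K
  have hppow : ((p : ℕ) : K) ^ (q - 1) = 1 := by
    have e : ((p:ℕ):K) ^ (q - 1) * ((p:ℕ):K) = ((p:ℕ):K) ^ q := by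
      rw [← pow_succ]; congr 1; omega
    rw [hpfix] at e
    exact mul_right_cancel₀ hpK (by rw [e, one_mul])
  have hppow2 : ((p : ℕ) : K) ^ (q + 1) = ((p : ℕ) : K) ^ 2 := by
    rw [pow_succ, hpfix]; ring
  have hJ0 : J ≠ 0 := by
    intro h
    rw [h, mul_zero] at hcube
    exact hg0 (pow_eq_zero_iff (n := 3) (by norm_num) |>.mp hcube)
  -- block A : q ∣ b
  have hblockA : (q:ℤ) ∣ Jb p → J = ((Ja p : ℤ):K) ∧ ((p:ℕ):K) = ((Ja p : ℤ):K)^2 ∧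
      ((Ja p : ℤ):K) ≠ 0 ∧ ((Ja p : ℤ):K) ^ q = ((Ja p : ℤ):K) := by
    intro hb
    have hbK : ((Jb p : ℤ) : K) = 0 := (CharP.intCast_eq_zero_iff K q _).mpr hb
    have hJa : J = ((Ja p : ℤ) : K) := by rw [hJ, hbK, zero_mul, add_zero]
    have hnormK : ((p : ℕ) : K) = ((Ja p : ℤ) : K) ^ 2 := by
      have e := congrArg (fun z : ℤ => (z : K)) (norm_eq hp3 (p := p))
      push_cast at e
      rw [Int.cast_mul (α := K)] at e
      push_cast at hbK
      linear_combination -e - ((Ja p : K) - (Jb p : K)) * hbK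
    have haK : ((Ja p : ℤ) : K) ≠ 0 := by
      intro h
      rw [h] at hnormK
      rw [show ((0:K))^2 = 0 by ring] at hnormK
      exact hpK hnormK
    have hafix : ((Ja p : ℤ) : K) ^ q = ((Ja p : ℤ) : K) := by
      have e : ((Ja p : ℤ) : K) = algebraMap (ZMod q) K ((Ja p : ℤ) : ZMod q) := by
        rw [map_intCast]
      rw [e, ← map_pow, ZMod.pow_card]
    exact ⟨hJa, hnormK, haK, hafix⟩
  -- block B : q ∤ b (so q ∣ 2a - b) : J² = -p
  have hblockB : ¬ (q:ℤ) ∣ Jb p → J ^ 2 = -((p : ℕ) : K) ∧ q ≠ 2 := by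
    intro hb
    have hab : (q:ℤ) ∣ 2 * Ja p - Jb p := hdvd.resolve_left hb
    have hq2 : q ≠ 2 := by
      intro h2
      apply hb
      subst h2
      omega
    have habK : ((2 * Ja p - Jb p : ℤ) : K) = 0 := (CharP.intCast_eq_zero_iff K q _).mpr hab
    have h2K : ((2 : ℕ) : K) ≠ 0 := by
      rw [Ne, CharP.cast_eq_zero_iff K q]
      exact fun h => hq2 ((Nat.prime_dvd_prime_iff_eq hq (by norm_num)).mp h)
    have hz2 : ζ ^ 2 + ζ + 1 = 0 := cube_sum_eq_zero hζ
    have h2J : (2 : K) * J = ((Jb p : ℤ) : K) * (1 + 2 * ζ) := by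
      rw [hJ]
      push_cast at habK ⊢
      rw [Int.cast_mul (α := K), Int.cast_ofNat] at habK
      linear_combination habK
    have hs2 : (1 + 2*ζ)^2 = -3 := by linear_combination (4:K) * hz2
    have hnormK : (4 : K) * ((p : ℕ) : K) = 3 * ((Jb p : ℤ) : K) ^ 2 := by
      have e := congrArg (fun z : ℤ => (z : K)) (norm_eq hp3 (p := p))
      push_cast at e habK
      rw [Int.cast_mul (α := K)] at e
      rw [Int.cast_mul (α := K), Int.cast_ofNat] at habK
      linear_combination (-4:K) * e + (2 * (Ja p : K) - (Jb p : K)) * habK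
    have h4J2 : (4:K) * J ^ 2 = -(3 * ((Jb p : ℤ) : K) ^ 2) := by
      calc (4:K) * J^2 = ((2:K)*J) * ((2:K)*J) := by ring
      _ = (((Jb p : ℤ):K) * (1+2*ζ)) * (((Jb p : ℤ):K) * (1+2*ζ)) := by rw [h2J]
      _ = ((Jb p : ℤ):K)^2 * ((1+2*ζ)^2) := by ring
      _ = -(3 * ((Jb p : ℤ):K)^2) := by rw [hs2]; ring
    have h4 : (4 : K) ≠ 0 := by
      have h22 : ((2:ℕ) : K) * ((2:ℕ):K) ≠ 0 := mul_ne_zero h2K h2K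
      push_cast at h22
      intro h
      apply h22
      linear_combination h
    refine ⟨?_, hq2⟩
    apply mul_left_cancel₀ h4
    linear_combination h4J2 + hnormK
  -- now the case analysis
  rcases hq30 with hr | hr
  · -- q ≡ 1 mod 3
    rw [hr, pow_one] at hshift
    have hgq : c * g ^ q = g := by rw [hcdef]; exact hshift
    have hgsplit : g ^ q = g ^ (q - 1) * g := by
      rw [← pow_succ]; congr 1; omega
    have hc1 : c * g ^ (q - 1) = 1 := by
      rw [hgsplit, ← mul_assoc] at hgq
      exact mul_right_cancel₀ hg0 (by rw [hgq, one_mul])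
    have h31 : 3 ∣ q - 1 := by omega
    obtain ⟨m, hm⟩ := h31
    have hgm : g ^ (q - 1) = (((p:ℕ):K) * J) ^ m := by
      rw [hm, pow_mul, hcube]
    rw [hgm] at hc1
    by_cases hb : (q:ℤ) ∣ Jb p
    · obtain ⟨hJa, hnormK, haK, hafix⟩ := hblockA hb
      have hPJ : ((p:ℕ):K) * J = ((Ja p : ℤ):K) ^ 3 := by rw [hJa, hnormK]; ring
      have hapow : ((Ja p : ℤ) : K) ^ (q - 1) = 1 := by
        have e : ((Ja p : ℤ):K) ^ (q - 1) * ((Ja p : ℤ):K) = ((Ja p : ℤ):K) ^ q := by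
          rw [← pow_succ]; congr 1; omega
        rw [hafix] at e
        exact mul_right_cancel₀ haK (by rw [e, one_mul])
      rw [hPJ, ← pow_mul, ← hm, hapow, mul_one] at hc1
      exact hc1
    · obtain ⟨hJ2, hq2⟩ := hblockB hb
      have hPJ2 : (((p:ℕ):K) * J) ^ 2 = -(((p:ℕ):K) ^ 3) := by
        linear_combination ((p:ℕ):K)^2 * hJ2
      have e := congrArg (fun z : K => z ^ 2) hc1
      simp only [one_pow] at e
      have e1 : (((((p:ℕ):K) * J)) ^ m) ^ 2 = (((((p:ℕ):K) * J)) ^ 2) ^ m := by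
        rw [← pow_mul, mul_comm m 2, pow_mul]
      have eL : (c * ((((p:ℕ):K) * J)) ^ m) ^ 2 = c ^ 2 * (((((p:ℕ):K) * J)) ^ 2) ^ m := by
        rw [mul_pow, e1]
      rw [eL, hPJ2, neg_pow, ← pow_mul, ← hm, hppow, mul_one] at e
      -- e : c ^ 2 * (-1) ^ m = 1
      have hx : ((-1:K))^m * ((-1:K))^m = 1 := by
        rw [← pow_add, ← two_mul, pow_mul, neg_one_sq, one_pow]
      have hc4 : c ^ 4 = 1 := by
        calc c ^ 4 = c ^ 4 * (((-1:K))^m * ((-1:K))^m) := by rw [hx, mul_one]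
        _ = (c^2 * ((-1:K))^m) * (c^2 * ((-1:K))^m) := by ring
        _ = 1 := by rw [e, one_mul]
      exact eq_one_of_pow248 hc3 (Or.inr (Or.inl hc4))
  · -- q ≡ 2 mod 3
    rw [hr] at hshift
    have hsq2 : (χ ^ 2) (((q:ℕ)) : ZMod p) = c ^ 2 := MulChar.pow_apply' χ two_ne_zero _
    have hinv : χ ^ 2 = χ⁻¹ := by
      apply eq_inv_of_mul_eq_one_left
      rw [← pow_succ]
      exact hχ3
    have hgs2 : gaussSum (χ ^ 2) ψ = gaussSum χ⁻¹ ψ⁻¹ := by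
      rw [hinv, ← mul_gaussSum_inv_eq_gaussSum χ⁻¹ ψ, MulChar.inv_apply_eq_inv',
        chi_neg_one hp3 hζ, inv_one, one_mul]
    rw [hsq2, hgs2] at hshift
    have hkey : c ^ 2 * g ^ (q + 1) = ((p : ℕ) : K) := by
      calc c ^ 2 * g ^ (q+1) = (c^2 * g^q) * g := by rw [pow_succ]; ring
      _ = gaussSum χ⁻¹ ψ⁻¹ * g := by rw [hshift]
      _ = ((p:ℕ) : K) := by rw [mul_comm]; exact hmul
    have h31 : 3 ∣ q + 1 := by omega
    obtain ⟨m, hm⟩ := h31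
    have hgm : g ^ (q + 1) = (((p:ℕ):K) * J) ^ m := by
      rw [hm, pow_mul, hcube]
    rw [hgm] at hkey
    by_cases hb : (q:ℤ) ∣ Jb p
    · obtain ⟨hJa, hnormK, haK, hafix⟩ := hblockA hb
      have hPJ : ((p:ℕ):K) * J = ((Ja p : ℤ):K) ^ 3 := by rw [hJa, hnormK]; ring
      have hapow : ((Ja p : ℤ) : K) ^ (q + 1) = ((Ja p : ℤ):K) ^ 2 := by
        rw [pow_succ, hafix]; ring
      rw [hPJ, ← pow_mul, ← hm, hapow] at hkey
      rw [hnormK] at hkey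
      have hc2 : c ^ 2 = 1 :=
        mul_right_cancel₀ (pow_ne_zero 2 haK) (by rw [hkey, one_mul])
      exact eq_one_of_pow248 hc3 (Or.inl hc2)
    · obtain ⟨hJ2, hq2⟩ := hblockB hb
      have hPJ2 : (((p:ℕ):K) * J) ^ 2 = -(((p:ℕ):K) ^ 3) := by
        linear_combination ((p:ℕ):K)^2 * hJ2
      have e := congrArg (fun z : K => z ^ 2) hkey
      have e1 : (((((p:ℕ):K) * J)) ^ m) ^ 2 = (((((p:ℕ):K) * J)) ^ 2) ^ m := by
        rw [← pow_mul, mul_comm m 2, pow_mul]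
      have eL : (c ^ 2 * ((((p:ℕ):K) * J)) ^ m) ^ 2
          = c ^ 4 * (((((p:ℕ):K) * J)) ^ 2) ^ m := by
        rw [mul_pow, e1]
        ring
      rw [eL, hPJ2, neg_pow, ← pow_mul, ← hm, hppow2] at e
      -- e : c^4 * ((-1)^m * pK^2) = pK^2
      have hp2 : (((p:ℕ):K)) ^ 2 ≠ 0 := pow_ne_zero 2 hpK
      have hc4m : c ^ 4 * ((-1:K))^m = 1 := by
        apply mul_right_cancel₀ hp2
        rw [one_mul, mul_assoc]
        exact e
      have hx : ((-1:K))^m * ((-1:K))^m = 1 := by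
        rw [← pow_add, ← two_mul, pow_mul, neg_one_sq, one_pow]
      have hc8 : c ^ 8 = 1 := by
        calc c ^ 8 = c ^ 8 * (((-1:K))^m * ((-1:K))^m) := by rw [hx, mul_one]
        _ = (c^4 * ((-1:K))^m) * (c^4 * ((-1:K))^m) := by ring
        _ = 1 := by rw [hc4m, one_mul]
      exact eq_one_of_pow248 hc3 (Or.inr (Or.inr hc8))

end CharQ

end

end Nagell

/-- Nagell's bound: for every prime p ≡ 1 (mod 3) with p > 7, there is a prime
q < 2√p that is a cubic residue modulo p. -/
theorem nagell_small_cubic_residue (p : ℕ) (hp : p.Prime) (hp3 : p % 3 = 1) (hp7 : 7 < p) :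
    ∃ q : ℕ, q.Prime ∧ (q : ℝ) < 2 * Real.sqrt p ∧
      ∃ x : ℤ, x ^ 3 ≡ (q : ℤ) [ZMOD (p : ℤ)] := by
  haveI : Fact p.Prime := ⟨hp⟩
  set a := Nagell.Ja p with hadef
  set b := Nagell.Jb p with hbdef
  have hnorm : a ^ 2 - a * b + b ^ 2 = p := Nagell.norm_eq hp3
  have hform : (2*a - b)^2 + 3*b^2 = 4 * (p:ℤ) := by linear_combination 4 * hnorm
  -- the final goal, given a small prime cubic residue
  have final : ∀ q : ℕ, q.Prime → q^2 < 4*p → (∃ x : ZMod p, x^3 = (q : ZMod p)) →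
      ∃ q : ℕ, q.Prime ∧ (q : ℝ) < 2 * Real.sqrt p ∧
        ∃ x : ℤ, x ^ 3 ≡ (q : ℤ) [ZMOD (p : ℤ)] := by
    rintro q hq hsize ⟨x, hx⟩
    refine ⟨q, hq, ?_, ?_⟩
    · have h1 : ((q:ℝ))^2 < 4*p := by exact_mod_cast hsize
      have h2 : (q:ℝ) < Real.sqrt (4*p) := (Real.lt_sqrt (by positivity)).mpr h1
      have h3 : Real.sqrt (4*(p:ℝ)) = 2 * Real.sqrt p := by
        rw [show (4:ℝ)*(p:ℝ) = 2^2 * p by norm_num, Real.sqrt_mul (by positivity),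
          Real.sqrt_sq (by norm_num : (0:ℝ) ≤ 2)]
      rwa [h3] at h2
    · refine ⟨((x.val : ℕ) : ℤ), ?_⟩
      have := (ZMod.intCast_eq_intCast_iff ((((x.val : ℕ) : ℤ))^3) (((q:ℕ)):ℤ) p).mp ?_
      · exact_mod_cast this
      · push_cast
        rw [ZMod.natCast_rightInverse x, hx]
  have h34p : ¬ (3:ℤ) ∣ 4 * (p:ℤ) := by
    intro h
    have h2 : (3:ℕ) ∣ 4 * p := by exact_mod_cast h
    have h3 : (3:ℕ) ∣ p := by omega
    omega
  have hbne : b ≠ 0 := by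
    intro h
    have h1 : a^2 = p := by linear_combination hnorm + (a - b) * h
    have h2 : a.natAbs * a.natAbs = p := by
      have := congrArg Int.natAbs h1
      rwa [show (a^2).natAbs = a.natAbs * a.natAbs by rw [pow_two, Int.natAbs_mul],
        Int.natAbs_natCast] at this
    rcases (Nat.Prime.eq_one_or_self_of_dvd hp a.natAbs ⟨a.natAbs, h2.symm⟩) with h3 | h3
    · rw [h3] at h2; omega
    · rw [h3] at h2; nlinarith [hp.two_le]
  have hCne : 2*a - b ≠ 0 := by
    intro h
    apply h34p
    have h1 : 3*b^2 = 4*(p:ℤ) := by linear_combination hform - (2*a - b) * h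
    exact ⟨b^2, h1.symm⟩
  have h3C : ¬ (3:ℤ) ∣ (2*a - b) := by
    intro h
    apply h34p
    obtain ⟨k, hk⟩ := h
    exact ⟨3*k^2 + b^2, by linear_combination (2*a - b + 3*k) * hk - hform⟩
  set B := b.natAbs with hBdef
  set C := (2*a - b).natAbs with hCdef
  have hBsq : (B:ℤ)^2 = b^2 := by rw [hBdef]; push_cast [Int.natAbs_sq]; rw [sq_abs]
  have hCsq : (C:ℤ)^2 = (2*a - b)^2 := by rw [hCdef]; push_cast [Int.natAbs_sq]; rw [sq_abs]
  have hBC : C^2 + 3*B^2 = 4*p := by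
    have : ((C^2 + 3*B^2 : ℕ) : ℤ) = ((4*p : ℕ) : ℤ) := by
      push_cast
      rw [hBsq, hCsq]
      linear_combination hform
    exact_mod_cast this
  have hB0 : B ≠ 0 := fun h => hbne (Int.natAbs_eq_zero.mp h)
  have hC0 : C ≠ 0 := fun h => hCne (Int.natAbs_eq_zero.mp h)
  have hBb : (B:ℤ) ∣ b := Int.natAbs_dvd.mpr dvd_rfl
  have hCc : (C:ℤ) ∣ (2*a - b) := Int.natAbs_dvd.mpr dvd_rfl
  by_cases hC1 : C = 1
  · by_cases hB3 : ∀ r : ℕ, r.Prime → r ∣ B → r = 3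
    · -- exceptional case : C = 1 and B = 3 ^ j
      have hBpow := Nat.eq_prime_pow_of_unique_prime_dvd hB0
        (fun {d} hd hdd => hB3 d hd hdd)
      set j := B.primeFactorsList.length with hjdef
      have hpw : (3:ℕ) ^ (2*j+1) = 3 * (3^j)^2 := by
        rw [pow_succ, ← pow_mul, mul_comm j 2]
        ring
      have h4p : 4 * p = 1 + 3 ^ (2*j+1) := by
        rw [← hBC, hC1, hBpow, hpw]
        norm_num
      by_cases h3j : (2*j+1) % 3 = 0
      · -- then 7 ∣ p : contradiction
        exfalso
        obtain ⟨t, ht⟩ : (3:ℕ) ∣ 2*j+1 := by omega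
        have ht1 : t % 2 = 1 := by omega
        have hmod : (27:ℤ)^t ≡ (-1)^t [ZMOD 28] := Int.ModEq.pow t (by decide)
        have hodd : Odd t := Nat.odd_iff.mpr ht1
        rw [hodd.neg_one_pow] at hmod
        have h28 : (28:ℤ) ∣ (27:ℤ)^t + 1 := by
          have := Int.ModEq.dvd hmod
          simpa using (dvd_sub_comm.mp this)
        have h27 : (27:ℤ)^t = 3^(2*j+1) := by
          rw [ht, pow_mul]
          norm_num
        have h4pz : ((4*p : ℕ) : ℤ) = (27:ℤ)^t + 1 := by
          rw [h4p, h27]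
          push_cast
          ring
        have h7 : (7:ℤ) ∣ ((4*p : ℕ) : ℤ) := by
          rw [h4pz]
          exact dvd_trans (by norm_num) h28
        have h7n : (7:ℕ) ∣ 4*p := by exact_mod_cast h7
        have h7p : (7:ℕ) ∣ p := by omega
        have := (Nat.prime_dvd_prime_iff_eq (by norm_num) hp).mp h7p
        omega
      · -- 3 is a small prime cubic residue
        apply final 3 (by norm_num) (by omega)
        have h3F : ((3:ℕ) : ZMod p) ≠ 0 := by
          rw [Ne, ZMod.natCast_eq_zero_iff]
          intro h
          have := (Nat.prime_dvd_prime_iff_eq hp (by norm_num)).mp h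
          omega
        set u3 : (ZMod p)ˣ := Units.mk0 _ h3F with hu3
        have hval : ((3:ℕ) : ZMod p) ^ (2*j+1) = -1 := by
          have h0 : ((4*p : ℕ) : ZMod p) = 0 := by
            push_cast [ZMod.natCast_self]
            ring
          rw [h4p] at h0
          push_cast at h0
          push_cast
          linear_combination h0
        have hupow : u3 ^ (2*j+1) = -1 := by
          ext
          rw [Units.val_pow_eq_pow_val]
          simpa [hu3] using hval
        have hind : ((2*j+1 : ℕ) : ZMod 3) * Nagell.ind u3 = 0 := by
          rw [← Nagell.ind_pow hp3, hupow, Nagell.ind_neg_one hp3]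
        have hcast : ((2*j+1 : ℕ) : ZMod 3) ≠ 0 := by
          rw [Ne, ZMod.natCast_eq_zero_iff]
          omega
        have hind0 : Nagell.ind u3 = 0 := by
          rcases mul_eq_zero.mp hind with h | h
          · exact absurd h hcast
          · exact h
        obtain ⟨v, hv⟩ := (Nagell.ind_eq_zero_iff_cube hp3 u3).mp hind0
        refine ⟨(v : ZMod p), ?_⟩
        rw [← Units.val_pow_eq_pow_val, hv]
        rfl
    · -- B has a prime factor r ≠ 3
      push_neg at hB3
      obtain ⟨r, hrp, hrB, hr3⟩ := hB3
      have hrb : (r:ℤ) ∣ b := dvd_trans (Int.natCast_dvd_natCast.mpr hrB) hBb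
      have hrsize : r^2 < 4*p := by
        have h1 : r ≤ B := Nat.le_of_dvd (Nat.pos_of_ne_zero hB0) hrB
        nlinarith [hBC]
      have hrnp : ¬ r ∣ p := by
        intro h
        have := (Nat.prime_dvd_prime_iff_eq hrp hp).mp h
        subst this
        nlinarith [hp.two_le]
      apply final r hrp hrsize
      exact Nagell.cubic_residue_of_dvd hp3 hrp hr3 hrnp (Or.inl hrb)
  · -- C > 1 : C has a prime factor, necessarily ≠ 3
    obtain ⟨r, hrp, hrC⟩ := Nat.exists_prime_and_dvd hC1
    have hrc : (r:ℤ) ∣ 2*a - b := dvd_trans (Int.natCast_dvd_natCast.mpr hrC) hCc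
    have hr3 : r ≠ 3 := by
      intro h
      subst h
      exact h3C (dvd_trans (by exact_mod_cast Int.natCast_dvd_natCast.mpr hrC) hCc)
    have hrsize : r^2 < 4*p := by
      have h1 : r ≤ C := Nat.le_of_dvd (Nat.pos_of_ne_zero hC0) hrC
      nlinarith [hBC, Nat.pos_of_ne_zero hB0]
    have hrnp : ¬ r ∣ p := by
      intro h
      have := (Nat.prime_dvd_prime_iff_eq hrp hp).mp h
      subst this
      nlinarith [hp.two_le]
    apply final r hrp hrsize
    exact Nagell.cubic_residue_of_dvd hp3 hrp hr3 hrnp (Or.inr hrc)
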